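/- For any Conwell heptad H, exactly 21 of the 56 external lines meet H (necessarily in two points) and exactly 35 external lines are disjoint from H; that is, the number of 3-element sets L of nonzero vectors of (Fin 6 → ZMod 2), each with Q-value 1, summing to 0, with L ∩ H ≠ ∅ is 21, and the number of such L with L ∩ H = ∅ is 35. -/
import Mathlib

/-- The hyperbolic quadratic form on GF(2)^6. -/
def Q (v : Fin 6 → ZMod 2) : ZMod 2 := v 0 * v 1 + v 2 * v 3 + v 4 * v 5

/-- A Conwell heptad: a set of seven off-quadric points such that the line joining any
two of them is external to the quadric. -/
def IsConwellHeptad (H : Finset (Fin 6 → ZMod 2)) : Prop :=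
  H.card = 7 ∧ (∀ v ∈ H, v ≠ 0 ∧ Q v = 1) ∧
    ∀ a ∈ H, ∀ b ∈ H, a ≠ b → Q (a + b) = 1

abbrev V2 : Type := Fin 6 → ZMod 2

/-- the polar bilinear form -/
def Bf (x y : V2) : ZMod 2 :=
  x 0 * y 1 + x 1 * y 0 + x 2 * y 3 + x 3 * y 2 + x 4 * y 5 + x 5 * y 4

lemma zmod2_add_self (a : ZMod 2) : a + a = 0 := by revert a; decide

lemma V_add_self (x : V2) : x + x = 0 := by
  funext i; exact zmod2_add_self (x i)

lemma V_addK (x y : V2) : x + (x + y) = y := by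
  rw [← add_assoc, V_add_self, zero_add]

lemma Q_add (x y : V2) : Q (x + y) = Q x + Q y + Bf x y := by
  simp only [Q, Bf, Pi.add_apply]; ring

lemma Bf_comm (x y : V2) : Bf x y = Bf y x := by simp only [Bf]; ring

lemma Bf_self (x : V2) : Bf x x = 0 := by
  have h := Q_add x x
  rw [V_add_self] at h
  have h0 : Q 0 = 0 := by simp [Q]
  rw [h0, zmod2_add_self, zero_add] at h
  exact h.symm

lemma Bf_add_left (x y z : V2) : Bf (x + y) z = Bf x z + Bf y z := by
  simp only [Bf, Pi.add_apply]; ring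

lemma Bf_add_right (x y z : V2) : Bf x (y + z) = Bf x y + Bf x z := by
  simp only [Bf, Pi.add_apply]; ring

lemma count28 : (Finset.univ.filter (fun v : V2 => Q v = 1)).card = 28 := by decide

lemma count12 : ∀ a : V2, Q a = 1 →
    (Finset.univ.filter (fun x : V2 => Q x = 1 ∧ Q (a + x) = 1)).card = 12 := by decide

section Heptad

variable {H : Finset V2} (hH : IsConwellHeptad H)

lemma hep_B (hH : IsConwellHeptad H) :
    ∀ a ∈ H, ∀ b ∈ H, a ≠ b → Bf a b = 1 := by
  intro a ha b hb hab
  have h := hH.2.2 a ha b hb hab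
  rw [Q_add, (hH.2.1 a ha).2, (hH.2.1 b hb).2, zmod2_add_self, zero_add] at h
  exact h

lemma hep_nocol (hH : IsConwellHeptad H) :
    ∀ a ∈ H, ∀ b ∈ H, ∀ c ∈ H, a ≠ b → a ≠ c → b ≠ c → a + b + c ≠ 0 := by
  intro a ha b hb c hc hab hac hbc h0
  have hc' : c = a + b := by
    have h := V_addK (a + b) c
    rw [h0, add_zero] at h
    exact h.symm
  obtain ⟨d, hd, hds⟩ : ∃ d ∈ H, d ∉ ({a, b, c} : Finset V2) := by
    by_contra hcon
    push_neg at hcon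
    have hsub : H ⊆ {a, b, c} := fun x hx => hcon x hx
    have h1 := Finset.card_le_card hsub
    have h2 := Finset.card_insert_le a ({b, c} : Finset V2)
    have h3 := Finset.card_insert_le b ({c} : Finset V2)
    have h4 : ({c} : Finset V2).card = 1 := Finset.card_singleton c
    have h5 := hH.1
    omega
  simp only [Finset.mem_insert, Finset.mem_singleton, not_or] at hds
  obtain ⟨hda, hdb, hdc⟩ := hds
  have hB := hep_B hH
  have e1 : Bf c d = 1 := hB c hc d hd (fun h => hdc h.symm)
  have e2 : Bf a d = 1 := hB a ha d hd (fun h => hda h.symm)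
  have e3 : Bf b d = 1 := hB b hb d hd (fun h => hdb h.symm)
  rw [hc', Bf_add_left, e2, e3] at e1
  exact absurd e1 (by decide)

lemma hep_nmem (hH : IsConwellHeptad H) :
    ∀ a ∈ H, ∀ b ∈ H, a ≠ b → a + b ∉ H := by
  intro a ha b hb hab hmem
  have hca : a + b ≠ a := by
    intro h
    have : b = 0 := by
      have := V_addK a b
      rw [show a + (a + b) = a + a from by rw [h], V_add_self] at this
      exact this.symm
    exact (hH.2.1 b hb).1 this
  have hcb : a + b ≠ b := by
    intro h
    have : a = 0 := by
      have h2 : b + (a + b) = b + b := by rw [h]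
      rw [V_add_self, add_comm a b, V_addK] at h2
      exact h2
    exact (hH.2.1 a ha).1 this
  exact hep_nocol hH a ha b hb (a + b) hmem hab (Ne.symm hca) (Ne.symm hcb)
    (by rw [add_assoc, ← add_assoc, V_add_self])

/-- pair sums are "injective": if a+b = c+d for heptad elements with a≠b, c≠d then
the pairs coincide. -/
lemma hep_sum_inj (hH : IsConwellHeptad H) :
    ∀ a ∈ H, ∀ b ∈ H, ∀ c ∈ H, ∀ d ∈ H, a ≠ b → c ≠ d → a + b = c + d →
      (a = c ∧ b = d) ∨ (a = d ∧ b = c) := by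
  intro a ha b hb c hc d hd hab hcd h
  by_cases hac : a = c
  · left
    refine ⟨hac, ?_⟩
    subst hac
    exact add_left_cancel h
  by_cases had : a = d
  · right
    refine ⟨had, ?_⟩
    subst had
    rw [add_comm c a] at h
    exact add_left_cancel h
  exfalso
  by_cases hbc : b = c
  · subst hbc
    rw [add_comm a b] at h
    have := add_left_cancel h
    exact had this
  by_cases hbd : b = d
  · subst hbd
    rw [add_comm a b, add_comm c b] at h
    have := add_left_cancel h
    exact hac this
  -- all four distinct
  have hB := hep_B hH
  have e1 : Bf (a + b) c = 0 := by
    rw [Bf_add_left, Bf_comm a c, hB c hc a ha (Ne.symm hac), Bf_comm b c,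
      hB c hc b hb (Ne.symm hbc), zmod2_add_self]
  have e2 : Bf (c + d) c = 1 := by
    rw [Bf_add_left, Bf_self, Bf_comm d c, hB c hc d hd hcd, zero_add]
  rw [h, e2] at e1
  exact absurd e1 (by decide)

/-- every partner of a heptad point (w.r.t. external lines) is in H or sums into H -/
lemma hep_partner (hH : IsConwellHeptad H) :
    ∀ a ∈ H, ∀ x : V2, Q x = 1 → Q (a + x) = 1 → (x ∈ H ∨ a + x ∈ H) := by
  intro a ha x hQx hQax
  classical
  set P : Finset V2 := Finset.univ.filter (fun x : V2 => Q x = 1 ∧ Q (a + x) = 1) with hP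
  have hPcard : P.card = 12 := count12 a (hH.2.1 a ha).2
  set K : Finset V2 := (H.erase a) ∪ (H.erase a).image (fun b => a + b) with hK
  have hKsub : K ⊆ P := by
    intro y hy
    rw [hK, Finset.mem_union] at hy
    rw [hP, Finset.mem_filter]
    refine ⟨Finset.mem_univ _, ?_⟩
    rcases hy with hy | hy
    · have hyH := Finset.mem_of_mem_erase hy
      have hya := Finset.ne_of_mem_erase hy
      exact ⟨(hH.2.1 y hyH).2, hH.2.2 a ha y hyH (Ne.symm hya)⟩
    · obtain ⟨b, hb, rfl⟩ := Finset.mem_image.mp hy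
      have hbH := Finset.mem_of_mem_erase hb
      have hba := Finset.ne_of_mem_erase hb
      refine ⟨hH.2.2 a ha b hbH (Ne.symm hba), ?_⟩
      rw [V_addK]
      exact (hH.2.1 b hbH).2
  have hKcard : K.card = 12 := by
    rw [hK, Finset.card_union_of_disjoint, Finset.card_image_of_injective _
      (add_right_injective a), Finset.card_erase_of_mem ha, hH.1]
    rw [Finset.disjoint_left]
    intro y hy hy'
    obtain ⟨b, hb, rfl⟩ := Finset.mem_image.mp hy'
    have hbH := Finset.mem_of_mem_erase hb
    have hba := Finset.ne_of_mem_erase hb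
    exact hep_nmem hH a ha b hbH (Ne.symm hba) (Finset.mem_of_mem_erase hy)
  have hKP : K = P := Finset.eq_of_subset_of_card_le hKsub (by omega)
  have hxP : x ∈ P := by
    rw [hP, Finset.mem_filter]
    exact ⟨Finset.mem_univ _, hQx, hQax⟩
  rw [← hKP, hK, Finset.mem_union] at hxP
  rcases hxP with h | h
  · exact Or.inl (Finset.mem_of_mem_erase h)
  · obtain ⟨b, hb, rfl⟩ := Finset.mem_image.mp h
    right
    rw [V_addK]
    exact Finset.mem_of_mem_erase hb

/-- every off-quadric point outside H is a pair sum from H -/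
lemma hep_cover (hH : IsConwellHeptad H) :
    ∀ x : V2, Q x = 1 → x ∉ H → ∃ a ∈ H, ∃ b ∈ H, a ≠ b ∧ x = a + b := by
  classical
  intro x hQx hxH
  set Off : Finset V2 := Finset.univ.filter (fun v : V2 => Q v = 1) \ H with hOff
  have hHsub : H ⊆ Finset.univ.filter (fun v : V2 => Q v = 1) := by
    intro v hv
    exact Finset.mem_filter.mpr ⟨Finset.mem_univ _, (hH.2.1 v hv).2⟩
  have hOffcard : Off.card = 21 := by
    rw [hOff, Finset.card_sdiff_of_subset hHsub, count28, hH.1]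
  set S : Finset V2 := (H.powersetCard 2).image (fun s => ∑ v ∈ s, v) with hS
  have hScard : S.card = 21 := by
    have hinj : Set.InjOn (fun s : Finset V2 => ∑ v ∈ s, v) (H.powersetCard 2) := by
      intro s hs t ht hst
      rw [Finset.mem_coe, Finset.mem_powersetCard] at hs ht
      obtain ⟨a, b, hab, rfl⟩ := Finset.card_eq_two.mp hs.2
      obtain ⟨c, d, hcd, rfl⟩ := Finset.card_eq_two.mp ht.2
      dsimp only at hst
      rw [Finset.sum_pair hab, Finset.sum_pair hcd] at hst
      have ha : a ∈ H := hs.1 (by simp)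
      have hb : b ∈ H := hs.1 (by simp)
      have hc : c ∈ H := ht.1 (by simp)
      have hd : d ∈ H := ht.1 (by simp)
      rcases hep_sum_inj hH a ha b hb c hc d hd hab hcd hst with ⟨h1, h2⟩ | ⟨h1, h2⟩
      · rw [h1, h2]
      · rw [h1, h2, Finset.pair_comm]
    rw [hS, Finset.card_image_of_injOn hinj, Finset.card_powersetCard, hH.1]
    rfl
  have hSsub : S ⊆ Off := by
    intro y hy
    rw [hS, Finset.mem_image] at hy
    obtain ⟨s, hs, rfl⟩ := hy
    rw [Finset.mem_powersetCard] at hs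
    obtain ⟨a, b, hab, rfl⟩ := Finset.card_eq_two.mp hs.2
    have ha : a ∈ H := hs.1 (by simp)
    have hb : b ∈ H := hs.1 (by simp)
    rw [Finset.sum_pair hab, hOff, Finset.mem_sdiff]
    exact ⟨Finset.mem_filter.mpr ⟨Finset.mem_univ _, hH.2.2 a ha b hb hab⟩,
      hep_nmem hH a ha b hb hab⟩
  have hSO : S = Off := Finset.eq_of_subset_of_card_le hSsub (by omega)
  have hxOff : x ∈ Off := by
    rw [hOff, Finset.mem_sdiff]
    exact ⟨Finset.mem_filter.mpr ⟨Finset.mem_univ _, hQx⟩, hxH⟩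
  rw [← hSO, hS, Finset.mem_image] at hxOff
  obtain ⟨s, hs, hsx⟩ := hxOff
  rw [Finset.mem_powersetCard] at hs
  obtain ⟨a, b, hab, rfl⟩ := Finset.card_eq_two.mp hs.2
  exact ⟨a, hs.1 (by simp), b, hs.1 (by simp), hab,
    by rw [← hsx, Finset.sum_pair hab]⟩

end Heptad

def lineOf2 (s : Finset V2) : Finset V2 := insert (∑ v ∈ s, v) s

def lineOf3 (s : Finset V2) : Finset V2 := s.image (fun v => v + ∑ w ∈ s, w)

lemma add4 (x y z : V2) : (x + y) + (x + z) = y + z := by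
  rw [add_comm x y, add_assoc, V_addK]

lemma lineOf3_spec (x y z : V2) (hxy : x ≠ y) (hxz : x ≠ z) (hyz : y ≠ z) :
    lineOf3 {x, y, z} = {y + z, x + z, x + y} := by
  have hsum : ∑ w ∈ ({x, y, z} : Finset V2), w = x + (y + z) := by
    rw [Finset.sum_insert (by simp [hxy, hxz]), Finset.sum_pair hyz]
  have e1 : x + (x + (y + z)) = y + z := V_addK _ _
  have e2 : y + (x + (y + z)) = x + z := by
    rw [add_left_comm x y z, V_addK]
  have e3 : z + (x + (y + z)) = x + y := by
    rw [add_comm y z, add_left_comm x z y, V_addK]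
  unfold lineOf3
  rw [hsum, Finset.image_insert, Finset.image_insert, Finset.image_singleton,
    e1, e2, e3]

section Main

variable {H : Finset V2}

lemma meet_card (hH : IsConwellHeptad H) :
    (Finset.univ.filter (fun L : Finset (Fin 6 → ZMod 2) =>
        L.card = 3 ∧ (∑ v ∈ L, v) = 0 ∧ (∀ v ∈ L, v ≠ 0 ∧ Q v = 1) ∧
          (L ∩ H).Nonempty)).card = 21 := by
  classical
  have hset : (Finset.univ.filter (fun L : Finset (Fin 6 → ZMod 2) =>
        L.card = 3 ∧ (∑ v ∈ L, v) = 0 ∧ (∀ v ∈ L, v ≠ 0 ∧ Q v = 1) ∧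
          (L ∩ H).Nonempty)) = (H.powersetCard 2).image lineOf2 := by
    ext L
    simp only [Finset.mem_filter, Finset.mem_univ, true_and, Finset.mem_image,
      Finset.mem_powersetCard]
    constructor
    · rintro ⟨h3, hsum, hQall, ⟨a, haLH⟩⟩
      rw [Finset.mem_inter] at haLH
      obtain ⟨haL, haH⟩ := haLH
      have he2 : (L.erase a).card = 2 := by rw [Finset.card_erase_of_mem haL, h3]
      obtain ⟨x, y, hxy, hexy⟩ := Finset.card_eq_two.mp he2
      have hx' : x ∈ L.erase a := by rw [hexy]; simp
      have hy' : y ∈ L.erase a := by rw [hexy]; simp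
      have hax : a ≠ x := (Finset.ne_of_mem_erase hx').symm
      have hay : a ≠ y := (Finset.ne_of_mem_erase hy').symm
      have hxL : x ∈ L := Finset.mem_of_mem_erase hx'
      have hyL : y ∈ L := Finset.mem_of_mem_erase hy'
      have hLxy : L = insert a ({x, y} : Finset V2) := by
        rw [← hexy, Finset.insert_erase haL]
      rw [hLxy, Finset.sum_insert (by simp [hax, hay]), Finset.sum_pair hxy] at hsum
      have h1 : a = x + y := by
        have h := V_addK a (x + y)
        rw [hsum, add_zero] at h
        exact h
      have hyax : y = a + x := by
        rw [h1, add_comm x y, add_assoc, V_add_self, add_zero]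
      have hQx : Q x = 1 := (hQall x hxL).2
      have hQy : Q y = 1 := (hQall y hyL).2
      rcases hep_partner hH a haH x hQx (by rw [← hyax]; exact hQy) with hxH | haxH
      · refine ⟨{a, x}, ⟨?_, Finset.card_pair hax⟩, ?_⟩
        · exact Finset.insert_subset_iff.mpr ⟨haH, Finset.singleton_subset_iff.mpr hxH⟩
        · unfold lineOf2
          rw [Finset.sum_pair hax, ← hyax, hLxy]
          ext w
          simp only [Finset.mem_insert, Finset.mem_singleton]
          tauto
      · have hyH : y ∈ H := by rw [hyax]; exact haxH
        refine ⟨{a, y}, ⟨?_, Finset.card_pair hay⟩, ?_⟩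
        · exact Finset.insert_subset_iff.mpr ⟨haH, Finset.singleton_subset_iff.mpr hyH⟩
        · unfold lineOf2
          have hayx : a + y = x := by rw [hyax, V_addK]
          rw [Finset.sum_pair hay, hayx, hLxy]
          ext w
          simp only [Finset.mem_insert, Finset.mem_singleton]
          tauto
    · rintro ⟨s, ⟨hsub, hcard⟩, rfl⟩
      obtain ⟨a, b, hab, rfl⟩ := Finset.card_eq_two.mp hcard
      have ha : a ∈ H := hsub (by simp)
      have hb : b ∈ H := hsub (by simp)
      have hab0 : a + b ≠ 0 := by
        intro h
        have h2 := V_addK a b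
        rw [h, add_zero] at h2
        exact hab h2
      have hnab : a + b ∉ ({a, b} : Finset V2) := by
        simp only [Finset.mem_insert, Finset.mem_singleton]
        rintro (h | h)
        · have : b = 0 := by
            have := add_left_cancel (a := a) (b := b) (c := 0) (by rw [add_zero, h])
            exact this
          exact (hH.2.1 b hb).1 this
        · have : a = 0 := by
            have := add_right_cancel (a := a) (b := b) (c := 0) (by rw [zero_add, h])
            exact this
          exact (hH.2.1 a ha).1 this
      unfold lineOf2
      rw [Finset.sum_pair hab]
      refine ⟨?_, ?_, ?_, ?_⟩
      · rw [Finset.card_insert_of_notMem hnab, Finset.card_pair hab]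
      · rw [Finset.sum_insert hnab, Finset.sum_pair hab, V_add_self]
      · intro v hv
        simp only [Finset.mem_insert, Finset.mem_singleton] at hv
        rcases hv with rfl | rfl | rfl
        · exact ⟨hab0, hH.2.2 a ha b hb hab⟩
        · exact hH.2.1 _ ha
        · exact hH.2.1 _ hb
      · exact ⟨a, Finset.mem_inter.mpr ⟨by simp, ha⟩⟩
  have hrec : ∀ s ∈ (H.powersetCard 2 : Finset (Finset V2)), lineOf2 s ∩ H = s := by
    intro s hs
    rw [Finset.mem_powersetCard] at hs
    obtain ⟨a, b, hab, rfl⟩ := Finset.card_eq_two.mp hs.2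
    have ha : a ∈ H := hs.1 (by simp)
    have hb : b ∈ H := hs.1 (by simp)
    unfold lineOf2
    rw [Finset.sum_pair hab]
    ext w
    simp only [Finset.mem_inter, Finset.mem_insert, Finset.mem_singleton]
    constructor
    · rintro ⟨rfl | rfl | rfl, hw⟩
      · exact absurd hw (hep_nmem hH a ha b hb hab)
      · exact Or.inl rfl
      · exact Or.inr rfl
    · rintro (rfl | rfl)
      · exact ⟨Or.inr (Or.inl rfl), ha⟩
      · exact ⟨Or.inr (Or.inr rfl), hb⟩
  have hinj : Set.InjOn lineOf2 (H.powersetCard 2 : Finset (Finset V2)) := by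
    intro s hs t ht h
    rw [Finset.mem_coe] at hs ht
    rw [← hrec s hs, ← hrec t ht, h]
  rw [hset, Finset.card_image_of_injOn hinj, Finset.card_powersetCard, hH.1]
  rfl

set_option maxHeartbeats 2000000 in
lemma disj_card (hH : IsConwellHeptad H) :
    (Finset.univ.filter (fun L : Finset (Fin 6 → ZMod 2) =>
        L.card = 3 ∧ (∑ v ∈ L, v) = 0 ∧ (∀ v ∈ L, v ≠ 0 ∧ Q v = 1) ∧
          L ∩ H = ∅)).card = 35 := by
  classical
  have hB := hep_B hH
  have hset : (Finset.univ.filter (fun L : Finset (Fin 6 → ZMod 2) =>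
        L.card = 3 ∧ (∑ v ∈ L, v) = 0 ∧ (∀ v ∈ L, v ≠ 0 ∧ Q v = 1) ∧
          L ∩ H = ∅)) = (H.powersetCard 3).image lineOf3 := by
    ext L
    simp only [Finset.mem_filter, Finset.mem_univ, true_and, Finset.mem_image,
      Finset.mem_powersetCard]
    constructor
    · rintro ⟨h3, hsum, hQall, hdisj⟩
      have hnot : ∀ x ∈ L, x ∉ H := by
        intro x hx hxH
        have hmem : x ∈ L ∩ H := Finset.mem_inter.mpr ⟨hx, hxH⟩
        rw [hdisj] at hmem
        exact absurd hmem (Finset.notMem_empty x)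
      obtain ⟨u, v, w, huv, huw, hvw, rfl⟩ := Finset.card_eq_three.mp h3
      have huL : u ∈ ({u, v, w} : Finset V2) := by simp
      have hvL : v ∈ ({u, v, w} : Finset V2) := by simp
      have hwL : w ∈ ({u, v, w} : Finset V2) := by simp
      rw [Finset.sum_insert (by simp [huv, huw]), Finset.sum_pair hvw] at hsum
      have h1 : u = v + w := by
        have h := V_addK u (v + w)
        rw [hsum, add_zero] at h
        exact h
      have hwuv : w = u + v := by
        rw [h1, add_comm v w, add_assoc, V_add_self, add_zero]
      obtain ⟨a, ha, b, hb, hab, hu⟩ :=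
        hep_cover hH u (hQall u huL).2 (hnot u huL)
      obtain ⟨c, hc, d, hd, hcd, hv2⟩ :=
        hep_cover hH v (hQall v hvL).2 (hnot v hvL)
      by_cases hac : a = c
      · subst hac
        have hbd : b ≠ d := by
          intro h
          subst h
          exact huv (hu.trans hv2.symm)
        have hw2 : w = b + d := by rw [hwuv, hu, hv2, add4]
        refine ⟨{a, b, d}, ⟨?_, ?_⟩, ?_⟩
        · intro x hx
          simp only [Finset.mem_insert, Finset.mem_singleton] at hx
          rcases hx with rfl | rfl | rfl <;> assumption
        · rw [Finset.card_insert_of_notMem (by simp [hab, hcd]),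
            Finset.card_pair hbd]
        · rw [lineOf3_spec a b d hab hcd hbd, hu, hv2, hw2]
          ext x
          simp only [Finset.mem_insert, Finset.mem_singleton]
          tauto
      · by_cases had : a = d
        · subst had
          have hbc : b ≠ c := by
            intro h
            subst h
            exact huv (hu.trans (by rw [hv2, add_comm]))
          have hw2 : w = b + c := by
            rw [hwuv, hu, hv2, add_comm c a, add4]
          refine ⟨{a, b, c}, ⟨?_, ?_⟩, ?_⟩
          · intro x hx
            simp only [Finset.mem_insert, Finset.mem_singleton] at hx
            rcases hx with rfl | rfl | rfl <;> assumption
          · rw [Finset.card_insert_of_notMem (by simp [hab, hac]),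
              Finset.card_pair hbc]
          · rw [lineOf3_spec a b c hab hac hbc, hu, hv2, hw2, add_comm c a]
            ext x
            simp only [Finset.mem_insert, Finset.mem_singleton]
            tauto
        · by_cases hbc : b = c
          · subst hbc
            have had2 : a ≠ d := had
            have hw2 : w = a + d := by
              rw [hwuv, hu, hv2, add_comm a b, add4]
            refine ⟨{a, b, d}, ⟨?_, ?_⟩, ?_⟩
            · intro x hx
              simp only [Finset.mem_insert, Finset.mem_singleton] at hx
              rcases hx with rfl | rfl | rfl <;> assumption
            · rw [Finset.card_insert_of_notMem (by simp [hab, had2]),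
                Finset.card_pair hcd]
            · rw [lineOf3_spec a b d hab had2 hcd, hu, hv2, hw2]
              ext x
              simp only [Finset.mem_insert, Finset.mem_singleton]
              tauto
          · by_cases hbd : b = d
            · subst hbd
              have hw2 : w = a + c := by
                rw [hwuv, hu, hv2, add_comm a b, add_comm c b, add4]
              have hv3 : v = b + c := by rw [hv2, add_comm]
              refine ⟨{a, b, c}, ⟨?_, ?_⟩, ?_⟩
              · intro x hx
                simp only [Finset.mem_insert, Finset.mem_singleton] at hx
                rcases hx with rfl | rfl | rfl <;> assumption
              · rw [Finset.card_insert_of_notMem (by simp [hab, hac]),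
                  Finset.card_pair hbc]
              · rw [lineOf3_spec a b c hab hac hbc, hu, hv3, hw2]
                ext x
                simp only [Finset.mem_insert, Finset.mem_singleton]
                tauto
            · -- disjoint pairs: contradiction
              exfalso
              obtain ⟨e, he, f, hf, hef, hw2⟩ :=
                hep_cover hH w (hQall w hwL).2 (hnot w hwL)
              have hBa : Bf a w = 1 := by
                rw [hwuv, hu, hv2, Bf_add_right, Bf_add_right, Bf_add_right,
                  Bf_self, hB a ha b hb hab, hB a ha c hc hac, hB a ha d hd had]
                decide
              have hBb : Bf b w = 1 := by
                rw [hwuv, hu, hv2, Bf_add_right, Bf_add_right, Bf_add_right,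
                  Bf_self, hB b hb a ha (Ne.symm hab), hB b hb c hc hbc,
                  hB b hb d hd hbd]
                decide
              have hBc : Bf c w = 1 := by
                rw [hwuv, hu, hv2, Bf_add_right, Bf_add_right, Bf_add_right,
                  Bf_self, hB c hc a ha (Ne.symm hac), hB c hc b hb (Ne.symm hbc),
                  hB c hc d hd hcd]
                decide
              have hmem : ∀ g ∈ H, Bf g w = 1 → g = e ∨ g = f := by
                intro g hg hg1
                by_contra hcon
                push_neg at hcon
                rw [hw2, Bf_add_right, hB g hg e he hcon.1, hB g hg f hf hcon.2]
                  at hg1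
                exact absurd hg1 (by decide)
              have ha' := hmem a ha hBa
              have hb' := hmem b hb hBb
              have hc' := hmem c hc hBc
              rcases ha' with h1 | h1 <;> rcases hb' with h2 | h2 <;>
                rcases hc' with h3 | h3
              · exact hab (h1.trans h2.symm)
              · exact hab (h1.trans h2.symm)
              · exact hac (h1.trans h3.symm)
              · exact hbc (h2.trans h3.symm)
              · exact hbc (h2.trans h3.symm)
              · exact hac (h1.trans h3.symm)
              · exact hab (h1.trans h2.symm)
              · exact hab (h1.trans h2.symm)
    · rintro ⟨s, ⟨hsub, hcard⟩, rfl⟩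
      obtain ⟨a, b, c, hab, hac, hbc, rfl⟩ := Finset.card_eq_three.mp hcard
      have ha : a ∈ H := hsub (by simp)
      have hb : b ∈ H := hsub (by simp)
      have hc : c ∈ H := hsub (by simp)
      have d1 : b + c ≠ a + c := by
        intro h
        rcases hep_sum_inj hH b hb c hc a ha c hc hbc hac h with ⟨e1, _⟩ | ⟨e1, _⟩
        · exact hab e1.symm
        · exact hbc e1
      have d2 : b + c ≠ a + b := by
        intro h
        rcases hep_sum_inj hH b hb c hc a ha b hb hbc hab h with ⟨_, e2⟩ | ⟨_, e2⟩
        · exact hbc e2.symm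
        · exact hac e2.symm
      have d3 : a + c ≠ a + b := by
        intro h
        rcases hep_sum_inj hH a ha c hc a ha b hb hac hab h with ⟨_, e2⟩ | ⟨e1, _⟩
        · exact hbc e2.symm
        · exact hab e1
      rw [lineOf3_spec a b c hab hac hbc]
      have hz : ∀ x ∈ H, ∀ y ∈ H, x ≠ y → x + y ≠ 0 := by
        intro x hx y hy hxy h
        have h2 := V_addK x y
        rw [h, add_zero] at h2
        exact hxy h2
      refine ⟨?_, ?_, ?_, ?_⟩
      · rw [Finset.card_insert_of_notMem (by simp [d1, d2]), Finset.card_pair d3]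
      · rw [Finset.sum_insert (by simp [d1, d2]), Finset.sum_pair d3, add4,
          add_comm c b, V_add_self]
      · intro x hx
        simp only [Finset.mem_insert, Finset.mem_singleton] at hx
        rcases hx with rfl | rfl | rfl
        · exact ⟨hz b hb c hc hbc, hH.2.2 b hb c hc hbc⟩
        · exact ⟨hz a ha c hc hac, hH.2.2 a ha c hc hac⟩
        · exact ⟨hz a ha b hb hab, hH.2.2 a ha b hb hab⟩
      · rw [Finset.eq_empty_iff_forall_notMem]
        intro x hx
        rw [Finset.mem_inter] at hx
        obtain ⟨hx1, hx2⟩ := hx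
        simp only [Finset.mem_insert, Finset.mem_singleton] at hx1
        rcases hx1 with rfl | rfl | rfl
        · exact hep_nmem hH b hb c hc hbc hx2
        · exact hep_nmem hH a ha c hc hac hx2
        · exact hep_nmem hH a ha b hb hab hx2
  have hrec : ∀ s ∈ (H.powersetCard 3 : Finset (Finset V2)),
      H.filter (fun g => ∃ w ∈ lineOf3 s, Bf g w = 1) = s := by
    intro s hs
    rw [Finset.mem_powersetCard] at hs
    obtain ⟨a, b, c, hab, hac, hbc, rfl⟩ := Finset.card_eq_three.mp hs.2
    have ha : a ∈ H := hs.1 (by simp)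
    have hb : b ∈ H := hs.1 (by simp)
    have hc : c ∈ H := hs.1 (by simp)
    rw [lineOf3_spec a b c hab hac hbc]
    ext g
    simp only [Finset.mem_filter, Finset.mem_insert, Finset.mem_singleton]
    constructor
    · rintro ⟨hg, w, hw, hgw⟩
      by_contra hcon
      push_neg at hcon
      obtain ⟨hga, hgb, hgc⟩ := hcon
      rcases hw with rfl | rfl | rfl
      · rw [Bf_add_right, hB g hg b hb hgb, hB g hg c hc hgc] at hgw
        exact absurd hgw (by decide)
      · rw [Bf_add_right, hB g hg a ha hga, hB g hg c hc hgc] at hgw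
        exact absurd hgw (by decide)
      · rw [Bf_add_right, hB g hg a ha hga, hB g hg b hb hgb] at hgw
        exact absurd hgw (by decide)
    · rintro (h | h | h)
      · refine ⟨h ▸ ha, a + b, by simp, ?_⟩
        rw [h, Bf_add_right, Bf_self, hB a ha b hb hab, zero_add]
      · refine ⟨h ▸ hb, a + b, by simp, ?_⟩
        rw [h, Bf_add_right, Bf_self, hB b hb a ha (Ne.symm hab), add_zero]
      · refine ⟨h ▸ hc, b + c, by simp, ?_⟩
        rw [h, Bf_add_right, Bf_self, hB c hc b hb (Ne.symm hbc), add_zero]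
  have hinj : Set.InjOn lineOf3 (H.powersetCard 3 : Finset (Finset V2)) := by
    intro s hs t ht h
    rw [Finset.mem_coe] at hs ht
    rw [← hrec s hs, ← hrec t ht, h]
  rw [hset, Finset.card_image_of_injOn hinj, Finset.card_powersetCard, hH.1]
  rfl

end Main

/-- For any Conwell heptad, exactly 21 of the external lines meet it and exactly 35 are
disjoint from it. -/
theorem external_lines_meeting_heptad (H : Finset (Fin 6 → ZMod 2))
    (hH : IsConwellHeptad H) :
    (Finset.univ.filter (fun L : Finset (Fin 6 → ZMod 2) =>
        L.card = 3 ∧ (∑ v ∈ L, v) = 0 ∧ (∀ v ∈ L, v ≠ 0 ∧ Q v = 1) ∧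
          (L ∩ H).Nonempty)).card = 21 ∧
    (Finset.univ.filter (fun L : Finset (Fin 6 → ZMod 2) =>
        L.card = 3 ∧ (∑ v ∈ L, v) = 0 ∧ (∀ v ∈ L, v ≠ 0 ∧ Q v = 1) ∧
          L ∩ H = ∅)).card = 35 := by
  exact ⟨meet_card hH, disj_card hH⟩
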